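/- Let S ⊆ (0,∞) be an infinite countable set of positive reals, and assume that the reverse order > induces a well-ordering on S (i.e., every nonempty subset of S has a greatest element). Then for every map f : Q_S → ℕ there is an isometric copy X of Q_S inside Q_S such that the restriction of f to X is continuous (with respect to the induced metric topology on X and the discrete topology on ℕ) or injective. -/

import Mathlib

/-- The ultrametric Urysohn space with distances in `S`, realized as the
set of finitely supported functions from `S` to `ℕ`. -/
def QS (S : Set ℝ) : Type := {x : S → ℕ // (Function.support x).Finite}

/-- The ultrametric on `QS S`: the largest `s ∈ S` at which `x` and `y`
differ, and `0` if `x = y` (the supremum of the empty set of reals is `0`). -/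
noncomputable def qdist (S : Set ℝ) (x y : QS S) : ℝ :=
  sSup (Subtype.val '' {s : S | x.1 s ≠ y.1 s})

/-- `Y ⊆ QS S'` is an isometric copy of `X ⊆ QS S`. -/
def IsCopyIn (S S' : Set ℝ) (X : Set (QS S)) (Y : Set (QS S')) : Prop :=
  ∃ e : X → QS S', Function.Injective e ∧ Set.range e = Y ∧
    ∀ a b : X, qdist S' (e a) (e b) = qdist S a.1 b.1

/-- `X` is an isometric copy of `QS S` inside `QS S`. -/
def IsCopyOfQS (S : Set ℝ) (X : Set (QS S)) : Prop :=
  ∃ e : QS S → QS S, Function.Injective e ∧ Set.range e = X ∧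
    ∀ x y, qdist S (e x) (e y) = qdist S x y

/-- The reverse order `>` well-orders `S`: every nonempty subset of `S`
has a greatest element. -/
def RevWellOrdered (S : Set ℝ) : Prop :=
  ∀ T ⊆ S, T.Nonempty → ∃ m ∈ T, ∀ t ∈ T, t ≤ m

/-- `b` is a metric ball of `QS S` with radius `r ∈ S ∪ {0}`. -/
def IsBall (S : Set ℝ) (b : Set (QS S)) (r : ℝ) : Prop :=
  (r ∈ S ∨ r = 0) ∧ ∃ x : QS S, b = {y | qdist S x y ≤ r}

/-- `r⁻`: the greatest element of `S` below `r` (and `0` if there is none). -/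
noncomputable def rminus (S : Set ℝ) (r : ℝ) : ℝ := sSup {t | t ∈ S ∧ t < r}

/-- `A` is small in the ball `b` of radius `r`. -/
def SmallIn (S : Set ℝ) (A b : Set (QS S)) (r : ℝ) : Prop :=
  (r = 0 ∧ A ∩ b = ∅) ∨
  (0 < r ∧ ∃ F : Finset (QS S), A ∩ b ⊆ ⋃ c ∈ F, {y | qdist S c y ≤ rminus S r})

/-- `χ` admits at most `l` values on copies of `X` inside a copy of `QS S'`,
for every coloring with `k` colors. -/
def BRDbound (S S' : Set ℝ) (X : Set (QS S)) (l : ℕ) : Prop :=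
  ∀ k : ℕ, 0 < k → ∀ χ : Set (QS S') → Fin k,
    ∃ Q : Set (QS S'), IsCopyOfQS S' Q ∧
      (χ '' {Y | IsCopyIn S S' X Y ∧ Y ⊆ Q}).ncard ≤ l

/-- `X ⊆ QS S` has big Ramsey degree `l` in `U_{S'}`. -/
def HasBigRamseyDegree (S S' : Set ℝ) (X : Set (QS S)) (l : ℕ) : Prop :=
  IsLeast {m : ℕ | 0 < m ∧ BRDbound S S' X m} l
namespace Stmt3
noncomputable section
open Classical

variable {S : Set ℝ}

local instance : DecidableEq ↥S := Classical.decEq _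

/-! ### Basic facts about `qdist` -/

def dset (x y : QS S) : Set ℝ := Subtype.val '' {s : S | x.1 s ≠ y.1 s}

lemma qdist_def (x y : QS S) : qdist S x y = sSup (dset x y) := rfl

lemma dset_finite (x y : QS S) : (dset x y).Finite := by
  apply Set.Finite.image
  have hsub : {s : S | x.1 s ≠ y.1 s} ⊆ (Function.support x.1 ∪ Function.support y.1) := by
    intro s hs
    by_contra h
    simp only [Set.mem_union, Function.mem_support, not_or, not_not] at h
    exact hs (by simp [Set.mem_setOf_eq, h.1, h.2])
  exact (x.2.union y.2).subset hsub

lemma dset_bdd (x y : QS S) : BddAbove (dset x y) := (dset_finite x y).bddAbove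

lemma QS.ext_iff' {x y : QS S} : x = y ↔ ∀ s : S, x.1 s = y.1 s := by
  constructor
  · rintro rfl s; rfl
  · intro h; exact Subtype.ext (funext h)

lemma dset_nonempty {x y : QS S} (h : x ≠ y) : (dset x y).Nonempty := by
  have : ∃ s : S, x.1 s ≠ y.1 s := by
    by_contra hc; push_neg at hc
    exact h (QS.ext_iff'.2 hc)
  obtain ⟨s, hs⟩ := this
  exact ⟨s, s, hs, rfl⟩

lemma qdist_self (x : QS S) : qdist S x x = 0 := by
  have : dset x x = (∅ : Set ℝ) := by
    ext r; simp [dset]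
  rw [qdist_def, this, Real.sSup_empty]

lemma dset_comm (x y : QS S) : dset x y = dset y x := by
  ext r; simp [dset, ne_comm]

lemma qdist_comm (x y : QS S) : qdist S x y = qdist S y x := by
  rw [qdist_def, qdist_def, dset_comm]

lemma qdist_mem {x y : QS S} (h : x ≠ y) : qdist S x y ∈ dset x y :=
  (dset_nonempty h).csSup_mem (dset_finite x y)

lemma qdist_mem_S {x y : QS S} (h : x ≠ y) : qdist S x y ∈ S := by
  obtain ⟨s, _, hs2⟩ := qdist_mem h
  exact hs2 ▸ s.2

lemma le_qdist {x y : QS S} {s : S} (h : x.1 s ≠ y.1 s) : (s : ℝ) ≤ qdist S x y :=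
  le_csSup (dset_bdd x y) ⟨s, h, rfl⟩

lemma eq_of_qdist_lt {x y : QS S} {s : S} (h : qdist S x y < (s : ℝ)) : x.1 s = y.1 s := by
  by_contra hc
  exact absurd (le_qdist hc) (not_le.2 h)

lemma qdist_pos (hpos : S ⊆ Set.Ioi 0) {x y : QS S} (h : x ≠ y) : 0 < qdist S x y :=
  hpos (qdist_mem_S h)

lemma qdist_nonneg (hpos : S ⊆ Set.Ioi 0) (x y : QS S) : 0 ≤ qdist S x y := by
  rcases eq_or_ne x y with rfl | h
  · rw [qdist_self]
  · exact le_of_lt (qdist_pos hpos h)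

lemma qdist_le_iff {x y : QS S} {r : ℝ} (hr : 0 ≤ r) :
    qdist S x y ≤ r ↔ ∀ s : S, r < (s : ℝ) → x.1 s = y.1 s := by
  constructor
  · intro hq s hrs
    exact eq_of_qdist_lt (lt_of_le_of_lt hq hrs)
  · intro h
    rcases eq_or_ne x y with rfl | hne
    · rw [qdist_self]; exact hr
    · obtain ⟨s₀, hs₀, hval⟩ := qdist_mem hne
      rw [← hval]
      by_contra hc
      exact hs₀ (h _ (not_le.1 hc))

lemma qdist_lt_iff {x y : QS S} {r : ℝ} (hr : 0 < r) :
    qdist S x y < r ↔ ∀ s : S, r ≤ (s : ℝ) → x.1 s = y.1 s := by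
  constructor
  · intro hq s hrs
    exact eq_of_qdist_lt (lt_of_lt_of_le hq hrs)
  · intro h
    rcases eq_or_ne x y with rfl | hne
    · rw [qdist_self]; exact hr
    · obtain ⟨s₀, hs₀, hval⟩ := qdist_mem hne
      rw [← hval]
      by_contra hc
      exact hs₀ (h _ (not_lt.1 hc))

lemma qdist_eq_scale {x y : QS S} {s₀ : S} (h1 : x.1 s₀ ≠ y.1 s₀)
    (h2 : ∀ s : S, (s₀ : ℝ) < (s : ℝ) → x.1 s = y.1 s) : qdist S x y = (s₀ : ℝ) := by
  apply le_antisymm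
  · apply csSup_le (dset_nonempty (fun he => h1 (by rw [he])))
    rintro r ⟨s, hs, rfl⟩
    by_contra hc
    exact hs (h2 s (not_le.1 hc))
  · exact le_qdist h1

lemma qdist_ultra (hpos : S ⊆ Set.Ioi 0) (x y z : QS S) :
    qdist S x z ≤ max (qdist S x y) (qdist S y z) := by
  rw [qdist_le_iff (le_max_iff.2 (Or.inl (qdist_nonneg hpos x y)))]
  intro s hs
  rw [max_lt_iff] at hs
  rw [eq_of_qdist_lt hs.1, eq_of_qdist_lt hs.2]

lemma qdist_ultra_eq (hpos : S ⊆ Set.Ioi 0) {x y z : QS S}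
    (h : qdist S x y < qdist S y z) : qdist S x z = qdist S y z := by
  apply le_antisymm
  · have := qdist_ultra hpos x y z
    rwa [max_eq_right (le_of_lt h)] at this
  · have h2 := qdist_ultra hpos y x z
    rw [qdist_comm y x] at h2
    rcases max_cases (qdist S x y) (qdist S x z) with ⟨he, _⟩ | ⟨he, _⟩
    · rw [he] at h2; exact absurd (lt_of_le_of_lt h2 h) (lt_irrefl _)
    · rwa [he] at h2

end
end Stmt3
namespace Stmt3
noncomputable section
open Classical

variable {S : Set ℝ}

/-! ### Regions (open balls) and cells -/

def Reg (w : QS S) (t : ℝ) : Set (QS S) := {y | ∀ s : S, t ≤ (s : ℝ) → y.1 s = w.1 s}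

lemma self_mem_Reg (w : QS S) (t : ℝ) : w ∈ Reg w t := fun _ _ => rfl

lemma mem_Reg_iff_qdist {w y : QS S} {t : ℝ} (ht : 0 < t) :
    y ∈ Reg w t ↔ qdist S y w < t := qdist_lt_iff ht |>.symm

lemma Reg_mono {w : QS S} {t t' : ℝ} (h : t ≤ t') : Reg w t ⊆ Reg w t' :=
  fun y hy s hs => hy s (le_trans h hs)

lemma Reg_congr {w w' : QS S} {t : ℝ} (h : ∀ s : S, t ≤ (s : ℝ) → w.1 s = w'.1 s) :
    Reg w t = Reg w' t := by
  ext y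
  constructor <;> intro hy s hs
  · rw [hy s hs, h s hs]
  · rw [hy s hs, ← h s hs]

lemma Reg_eq_of_mem {w y : QS S} {t : ℝ} (hy : y ∈ Reg w t) : Reg y t = Reg w t :=
  Reg_congr (fun s hs => hy s hs)

lemma Reg_subset_of_mem {w y : QS S} {t t' : ℝ} (hy : y ∈ Reg w t) (h : t' ≤ t) :
    Reg y t' ⊆ Reg w t := by
  rw [← Reg_eq_of_mem hy]
  exact Reg_mono h

/-- Update one coordinate. -/
def upd (x : QS S) (s₀ : S) (k : ℕ) : QS S :=
  ⟨Function.update x.1 s₀ k, by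
    apply Set.Finite.subset (Set.Finite.union x.2 (Set.finite_singleton s₀))
    intro s hs
    rcases eq_or_ne s s₀ with rfl | h
    · exact Or.inr rfl
    · left
      rw [Function.mem_support] at hs ⊢
      rwa [Function.update_of_ne h] at hs⟩

@[simp] lemma upd_same (x : QS S) (s₀ : S) (k : ℕ) : (upd x s₀ k).1 s₀ = k :=
  Function.update_self _ _ _

lemma upd_noteq (x : QS S) {s₀ s : S} (h : s ≠ s₀) (k : ℕ) : (upd x s₀ k).1 s = x.1 s :=
  Function.update_of_ne h _ _

/-- The cell of index `b` at scale `σ` of the ball `B(w,σ)`. -/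
def cell (w : QS S) (σ : S) (b : ℕ) : Set (QS S) := Reg (upd w σ b) (σ : ℝ)

lemma mem_cell_iff {w y : QS S} {σ : S} {b : ℕ} :
    y ∈ cell w σ b ↔ y.1 σ = b ∧ ∀ s : S, (σ : ℝ) < (s : ℝ) → y.1 s = w.1 s := by
  constructor
  · intro hy
    refine ⟨by simpa using hy σ le_rfl, fun s hs => ?_⟩
    have hne : s ≠ σ := fun he => by rw [he] at hs; exact lt_irrefl _ hs
    have := hy s (le_of_lt hs)
    rwa [upd_noteq _ hne] at this
  · rintro ⟨h1, h2⟩ s hs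
    rcases eq_or_ne s σ with rfl | hne
    · simpa using h1
    · have hlt : (σ : ℝ) < (s : ℝ) := lt_of_le_of_ne hs (fun he => hne (Subtype.ext he.symm))
      rw [upd_noteq _ hne, h2 s hlt]

lemma mem_own_cell (y : QS S) (σ : S) : y ∈ cell y σ (y.1 σ) :=
  mem_cell_iff.2 ⟨rfl, fun _ _ => rfl⟩

lemma cell_eq_of_agree {w w' : QS S} {σ : S} (h : ∀ s : S, (σ : ℝ) < (s : ℝ) → w.1 s = w'.1 s)
    (b : ℕ) : cell w σ b = cell w' σ b := by
  ext y
  rw [mem_cell_iff, mem_cell_iff]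
  constructor <;> rintro ⟨h1, h2⟩
  · exact ⟨h1, fun s hs => by rw [h2 s hs]; exact h s hs⟩
  · exact ⟨h1, fun s hs => by rw [h2 s hs]; exact (h s hs).symm⟩

lemma cell_eq_of_qdist_le {w w' : QS S} {σ : S} (h : qdist S w w' ≤ (σ : ℝ)) (b : ℕ) :
    cell w σ b = cell w' σ b :=
  cell_eq_of_agree (fun s hs => eq_of_qdist_lt (lt_of_le_of_lt h hs)) b

lemma qdist_lt_of_same_cell (hpos : S ⊆ Set.Ioi 0) {w y y' : QS S} {σ : S} {b : ℕ}
    (hy : y ∈ cell w σ b) (hy' : y' ∈ cell w σ b) : qdist S y y' < (σ : ℝ) := by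
  rw [mem_cell_iff] at hy hy'
  rw [qdist_lt_iff (hpos σ.2)]
  intro s hs
  rcases eq_or_ne s σ with rfl | hne
  · rw [hy.1, hy'.1]
  · have hlt : (σ : ℝ) < (s : ℝ) := lt_of_le_of_ne hs (fun he => hne (Subtype.ext he.symm))
    rw [hy.2 s hlt, hy'.2 s hlt]

lemma qdist_eq_of_cells {w y y' : QS S} {σ : S} {b b' : ℕ} (hbb : b ≠ b')
    (hy : y ∈ cell w σ b) (hy' : y' ∈ cell w σ b') : qdist S y y' = (σ : ℝ) := by
  rw [mem_cell_iff] at hy hy'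
  apply qdist_eq_scale
  · rw [hy.1, hy'.1]; exact hbb
  · intro s hs
    rw [hy.2 s hs, hy'.2 s hs]

lemma qdist_center_cell {w y : QS S} {σ : S} {b : ℕ} (hb : b ≠ w.1 σ) (hy : y ∈ cell w σ b) :
    qdist S w y = (σ : ℝ) := by
  have hw : w ∈ cell w σ (w.1 σ) := mem_own_cell w σ
  exact qdist_eq_of_cells (fun h => hb h.symm) hw hy

lemma qdist_le_of_mem_cell (hpos : S ⊆ Set.Ioi 0) {w y : QS S} {σ : S} {b : ℕ}
    (hy : y ∈ cell w σ b) : qdist S w y ≤ (σ : ℝ) := by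
  rcases eq_or_ne b (w.1 σ) with rfl | hb
  · exact le_of_lt (qdist_lt_of_same_cell hpos (mem_own_cell w σ) hy)
  · exact le_of_eq (qdist_center_cell hb hy)

lemma cell_subset_Reg {w : QS S} {σ : S} {b : ℕ} {t : ℝ} (h : (σ : ℝ) < t) :
    cell w σ b ⊆ Reg w t := by
  intro y hy
  rw [mem_cell_iff] at hy
  intro s hs
  exact hy.2 s (lt_of_lt_of_le h hs)

lemma cell_subset_Reg' {w u : QS S} {σ : S} {b : ℕ} {t : ℝ} (hw : w ∈ Reg u t)
    (h : (σ : ℝ) < t) : cell w σ b ⊆ Reg u t :=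
  subset_trans (cell_subset_Reg h) (by rw [Reg_eq_of_mem hw])

/-- Members of a region at a higher threshold lie in the cell of their own index. -/
lemma mem_cell_self_of_close {w y : QS S} {σ : S} (h : ∀ s : S, (σ:ℝ) < (s:ℝ) → y.1 s = w.1 s) :
    y ∈ cell w σ (y.1 σ) := mem_cell_iff.2 ⟨rfl, h⟩

end
end Stmt3
namespace Stmt3
noncomputable section
open Classical

variable {S : Set ℝ}

/-! ### The coinductive predicates `Cpt` (constant lock) and `Iq` -/

/-- `r` anchors a constant copy (value `f r`) below threshold `τ`. -/
def Cpt (f : QS S → ℕ) (r : QS S) (τ : ℝ) : Prop :=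
  ∃ P : QS S → ℝ → Prop, P r τ ∧
    ∀ r₁ τ₁, P r₁ τ₁ → ∀ σ : S, (σ : ℝ) < τ₁ → ∀ G : Finset ℕ,
      ∃ b ∉ G, ∃ r' ∈ cell r₁ σ b, f r' = f r₁ ∧ P r' σ

lemma Cpt.unfold {f : QS S → ℕ} {r : QS S} {τ : ℝ} (h : Cpt f r τ) :
    ∀ σ : S, (σ : ℝ) < τ → ∀ G : Finset ℕ,
      ∃ b ∉ G, ∃ r' ∈ cell r σ b, f r' = f r ∧ Cpt f r' σ := by
  obtain ⟨P, hP, hstep⟩ := h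
  intro σ hσ G
  obtain ⟨b, hb, r', hr', hfr', hP'⟩ := hstep r τ hP σ hσ G
  exact ⟨b, hb, r', hr', hfr', P, hP', hstep⟩

lemma Cpt.mono {f : QS S → ℕ} {r : QS S} {τ τ' : ℝ} (h : Cpt f r τ) (hle : τ' ≤ τ) :
    Cpt f r τ' := by
  refine ⟨fun r₁ t₁ => ∃ t₂, t₁ ≤ t₂ ∧ Cpt f r₁ t₂, ⟨τ, hle, h⟩, ?_⟩
  rintro r₁ t₁ ⟨t₂, ht₂, hc⟩ σ hσ G
  obtain ⟨b, hb, r', hr', hfr', hc'⟩ := hc.unfold σ (lt_of_lt_of_le hσ ht₂) G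
  exact ⟨b, hb, r', hr', hfr', σ, le_rfl, hc'⟩

/-- The main coinductive predicate: `r` carries a continuous structure with
clearance `t` (a lock below some `τ > 0`, and slots at all scales in `[τ, t)`). -/
def Iq (f : QS S → ℕ) (r : QS S) (t : ℝ) : Prop :=
  ∃ P : QS S → ℝ → Prop, P r t ∧
    ∀ r₁ t₁, P r₁ t₁ → ∃ τ : ℝ, 0 < τ ∧ Cpt f r₁ τ ∧
      ∀ σ : S, τ ≤ (σ : ℝ) → (σ : ℝ) < t₁ → ∀ G : Finset ℕ,
        ∃ b ∉ G, ∃ r' ∈ cell r₁ σ b, P r' σ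

lemma Iq.unfold {f : QS S → ℕ} {r : QS S} {t : ℝ} (h : Iq f r t) :
    ∃ τ : ℝ, 0 < τ ∧ Cpt f r τ ∧
      ∀ σ : S, τ ≤ (σ : ℝ) → (σ : ℝ) < t → ∀ G : Finset ℕ,
        ∃ b ∉ G, ∃ r' ∈ cell r σ b, Iq f r' σ := by
  obtain ⟨P, hP, hstep⟩ := h
  obtain ⟨τ, hτ, hc, hslots⟩ := hstep r t hP
  refine ⟨τ, hτ, hc, fun σ h1 h2 G => ?_⟩
  obtain ⟨b, hb, r', hr', hP'⟩ := hslots σ h1 h2 G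
  exact ⟨b, hb, r', hr', P, hP', hstep⟩

lemma Iq.mono {f : QS S → ℕ} {r : QS S} {t t' : ℝ} (h : Iq f r t) (hle : t' ≤ t) :
    Iq f r t' := by
  refine ⟨fun r₁ t₁ => ∃ t₂, t₁ ≤ t₂ ∧ Iq f r₁ t₂, ⟨t, hle, h⟩, ?_⟩
  rintro r₁ t₁ ⟨t₂, ht₂, hc⟩
  obtain ⟨τ, hτ, hcpt, hslots⟩ := hc.unfold
  refine ⟨τ, hτ, hcpt, fun σ h1 h2 G => ?_⟩
  obtain ⟨b, hb, r', hr', hIq⟩ := hslots σ h1 (lt_of_lt_of_le h2 ht₂) G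
  exact ⟨b, hb, r', hr', σ, le_rfl, hIq⟩

lemma Iq_of_Cpt {f : QS S → ℕ} {r : QS S} {t : ℝ} (ht : 0 < t) (h : Cpt f r t) :
    Iq f r t := by
  refine ⟨fun r₁ t₁ => 0 < t₁ ∧ Cpt f r₁ t₁, ⟨ht, h⟩, ?_⟩
  rintro r₁ t₁ ⟨h1, h2⟩
  exact ⟨t₁, h1, h2, fun σ hσ1 hσ2 G => absurd (lt_of_le_of_lt hσ1 hσ2) (lt_irrefl _)⟩

/-! ### Presence and the SPOT lemma -/

/-- Value `v` is hereditarily present in the region `Reg w T`. -/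
def Pres (f : QS S → ℕ) (v : ℕ) (w : QS S) (T : ℝ) : Prop :=
  ∀ u ∈ Reg w T, ∀ t : ℝ, 0 < t → t ≤ T → ∃ y ∈ Reg u t, f y = v

lemma exists_nat_notin (G : Finset ℕ) : ∃ b, b ∉ G := Infinite.exists_notMem_finset G

lemma SPOT_aux (f : QS S → ℕ) (F : Finset ℕ) :
    ∀ (n : ℕ) (w : QS S) (T : ℝ), 0 < T → (∀ y ∈ Reg w T, f y ∈ F) →
    ({v ∈ (F : Set ℕ) | ∃ y ∈ Reg w T, f y = v}).ncard ≤ n →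
    ∃ w' ∈ Reg w T, ∃ T', 0 < T' ∧ T' ≤ T ∧ Reg w' T' ⊆ Reg w T ∧
      ∃ v, Pres f v w' T' := by
  intro n
  induction n with
  | zero =>
    intro w T hT hF hcard
    exfalso
    have hmem : f w ∈ {v ∈ (F : Set ℕ) | ∃ y ∈ Reg w T, f y = v} :=
      ⟨hF w (self_mem_Reg w T), w, self_mem_Reg w T, rfl⟩
    have hfin : {v ∈ (F : Set ℕ) | ∃ y ∈ Reg w T, f y = v}.Finite :=
      F.finite_toSet.subset (fun v hv => hv.1)
    have := Set.ncard_pos hfin |>.2 ⟨f w, hmem⟩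
    omega
  | succ n ih =>
    intro w T hT hF hcard
    by_cases hP : ∃ v, Pres f v w T
    · exact ⟨w, self_mem_Reg w T, T, hT, le_rfl, subset_rfl, hP⟩
    · push_neg at hP
      have hnp := hP (f w)
      unfold Pres at hnp
      push_neg at hnp
      obtain ⟨u, hu, t, ht, htT, hfree⟩ := hnp
      have hsub : Reg u t ⊆ Reg w T := Reg_subset_of_mem hu htT
      have hSS : {v ∈ (F : Set ℕ) | ∃ y ∈ Reg u t, f y = v} ⊂
          {v ∈ (F : Set ℕ) | ∃ y ∈ Reg w T, f y = v} := by
        constructor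
        · rintro v ⟨hvF, y, hy, rfl⟩
          exact ⟨hvF, y, hsub hy, rfl⟩
        · intro hc
          have : f w ∈ {v ∈ (F : Set ℕ) | ∃ y ∈ Reg u t, f y = v} :=
            hc ⟨hF w (self_mem_Reg w T), w, self_mem_Reg w T, rfl⟩
          obtain ⟨_, y, hy, hfy⟩ := this
          exact hfree y hy hfy
      have hfinb : {v ∈ (F : Set ℕ) | ∃ y ∈ Reg w T, f y = v}.Finite :=
        F.finite_toSet.subset (fun v hv => hv.1)
      have hlt := Set.ncard_lt_ncard hSS hfinb
      obtain ⟨w', hw', T', hT', hT'le, hsub', hv⟩ :=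
        ih u t ht (fun y hy => hF y (hsub hy)) (by omega)
      exact ⟨w', hsub hw', T', hT', le_trans hT'le htT, subset_trans hsub' hsub, hv⟩

lemma SPOT (f : QS S → ℕ) (F : Finset ℕ) (w : QS S) (T : ℝ) (hT : 0 < T)
    (hF : ∀ y ∈ Reg w T, f y ∈ F) :
    ∃ w' ∈ Reg w T, ∃ T', 0 < T' ∧ T' ≤ T ∧ Reg w' T' ⊆ Reg w T ∧
      ∃ v, Pres f v w' T' :=
  SPOT_aux f F _ w T hT hF le_rfl

lemma Cpt_of_Pres (hpos : S ⊆ Set.Ioi 0) {f : QS S → ℕ} {v : ℕ} {w r : QS S} {T τ : ℝ}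
    (hpres : Pres f v w T) (hr : r ∈ Reg w T) (hfr : f r = v) (hτT : τ ≤ T) :
    Cpt f r τ := by
  refine ⟨fun r₁ τ₁ => r₁ ∈ Reg w T ∧ f r₁ = v ∧ τ₁ ≤ T, ⟨hr, hfr, hτT⟩, ?_⟩
  rintro r₁ τ₁ ⟨h1, h2, h3⟩ σ hσ G
  obtain ⟨b, hb⟩ := exists_nat_notin G
  have hσT : (σ : ℝ) < T := lt_of_lt_of_le hσ h3
  have hu : upd r₁ σ b ∈ Reg w T := by
    intro s hs
    have hne : s ≠ σ := by
      intro he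
      rw [he] at hs
      exact absurd (lt_of_lt_of_le hσT hs) (lt_irrefl _)
    rw [upd_noteq _ hne]
    exact h1 s hs
  obtain ⟨y, hy, hfy⟩ := hpres (upd r₁ σ b) hu (σ : ℝ) (hpos σ.2) (le_of_lt hσT)
  refine ⟨b, hb, y, hy, by rw [hfy, h2], ?_, hfy, le_of_lt hσT⟩
  exact Reg_subset_of_mem hu (le_of_lt hσT) hy

/-- In an all-`F` region there is a point carrying the full continuous structure. -/
lemma Iq_of_allF (hpos : S ⊆ Set.Ioi 0) {f : QS S → ℕ} {F : Finset ℕ} {w : QS S} {T : ℝ}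
    (hT : 0 < T) (hF : ∀ y ∈ Reg w T, f y ∈ F) :
    ∃ r ∈ Reg w T, Iq f r T := by
  obtain ⟨w', hw', T', hT', hT'le, hsub', v, hpres⟩ := SPOT f F w T hT hF
  obtain ⟨r, hrmem, hfr⟩ := hpres w' (self_mem_Reg _ _) T' hT' le_rfl
  refine ⟨r, hsub' hrmem, ?_⟩
  refine ⟨fun r₁ t₁ => 0 < t₁ ∧ t₁ ≤ T ∧ ∃ w'' T'', 0 < T'' ∧ T'' ≤ T ∧ r₁ ∈ Reg w'' T'' ∧
      Reg w'' T'' ⊆ Reg w T ∧ Pres f (f r₁) w'' T'', ?_, ?_⟩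
  · exact ⟨hT, le_rfl, w', T', hT', hT'le, hrmem, hsub', by rw [hfr]; exact hpres⟩
  · rintro r₁ t₁ ⟨ht₁0, ht₁, w'', T'', hT'', hT''le, hr₁, hsub'', hpres''⟩
    refine ⟨min T'' t₁, lt_min hT'' ht₁0, ?_, ?_⟩
    · exact (Cpt_of_Pres hpos hpres'' hr₁ rfl (min_le_left _ _))
    · intro σ h1 h2 G
      obtain ⟨b, hb⟩ := exists_nat_notin G
      have hσT : (σ : ℝ) < T := lt_of_lt_of_le h2 ht₁
      have hcell : cell r₁ σ b ⊆ Reg w T := by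
        apply cell_subset_Reg' _ hσT
        exact hsub'' hr₁
      have hallF : ∀ y ∈ Reg (upd r₁ σ b) (σ : ℝ), f y ∈ F := fun y hy => hF y (hcell hy)
      obtain ⟨w₃, hw₃, T₃, hT₃, hT₃le, hsub₃, v₃, hpres₃⟩ :=
        SPOT f F (upd r₁ σ b) (σ : ℝ) (hpos σ.2) hallF
      obtain ⟨r', hr'mem, hfr'⟩ := hpres₃ w₃ (self_mem_Reg _ _) T₃ hT₃ le_rfl
      refine ⟨b, hb, r', hsub₃ hr'mem, hpos σ.2, le_of_lt hσT, w₃, T₃, hT₃,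
        le_trans hT₃le (le_of_lt hσT), hr'mem, subset_trans hsub₃ hcell,
        by rw [hfr']; exact hpres₃⟩

end
end Stmt3
namespace Stmt3
noncomputable section
open Classical

variable {S : Set ℝ}

/-! ### The inductive predicate `Bad` and the main harvest lemma -/

/-- `Bad f z σ`: in the ball `B(z,σ)`, apart from finitely many exceptional
cells, every point either has an `F`-value or is recursively `Bad` at a
strictly smaller scale. -/
inductive Bad (f : QS S → ℕ) : QS S → S → Prop where
  | mk (z : QS S) (σ : S) (F G : Finset ℕ) (g : QS S → S)
      (hlt : ∀ b ∉ G, ∀ y ∈ cell z σ b, f y ∉ F → ((g y : ℝ) < (σ : ℝ)))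
      (hbd : ∀ b ∉ G, ∀ y ∈ cell z σ b, f y ∉ F → Bad f y (g y)) : Bad f z σ

lemma notBad_unfold {f : QS S → ℕ} {z : QS S} {σ : S} (h : ¬ Bad f z σ) :
    ∀ F G : Finset ℕ, ∃ b ∉ G, ∃ y ∈ cell z σ b, f y ∉ F ∧
      ∀ σ' : S, (σ' : ℝ) < (σ : ℝ) → ¬ Bad f y σ' := by
  intro F G
  by_contra hc
  push_neg at hc
  apply h
  have hg : ∀ y : QS S, ∃ σ' : S, (f y ∉ F ∧ (∃ b ∉ G, y ∈ cell z σ b) →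
      ((σ' : ℝ) < (σ : ℝ) ∧ Bad f y σ')) := by
    intro y
    by_cases hy : f y ∉ F ∧ (∃ b ∉ G, y ∈ cell z σ b)
    · obtain ⟨b, hb, hcy⟩ := hy.2
      obtain ⟨σ', hσ', hbad⟩ := hc b hb y hcy hy.1
      exact ⟨σ', fun _ => ⟨hσ', hbad⟩⟩
    · exact ⟨σ, fun h' => absurd h' hy⟩
  choose g hg using hg
  refine Bad.mk z σ F G g ?_ ?_
  · intro b hb y hy hfy
    exact (hg y ⟨hfy, b, hb, hy⟩).1
  · intro b hb y hy hfy
    exact (hg y ⟨hfy, b, hb, hy⟩).2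

/-- The harvest lemma: below any `Bad` ball, cofinally many cells contain a
point carrying the full continuous structure at the cell's scale. -/
lemma LF (hpos : S ⊆ Set.Ioi 0) (hwo : RevWellOrdered S) {f : QS S → ℕ} :
    ∀ z σ, Bad f z σ → ∀ G' : Finset ℕ, ∃ b ∉ G', ∃ r ∈ cell z σ b, Iq f r (σ : ℝ) := by
  intro z₀ σ₀ hbad
  induction hbad with
  | mk z σ F G g hlt hbd IH =>
    intro G'
    obtain ⟨b, hb⟩ := exists_nat_notin (G ∪ G')
    have hbG : b ∉ G := fun h => hb (Finset.mem_union_left _ h)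
    have hbG' : b ∉ G' := fun h => hb (Finset.mem_union_right _ h)
    by_cases hA : ∀ y ∈ cell z σ b, f y ∈ F
    · -- all-F cell
      obtain ⟨r, hr, hIq⟩ := Iq_of_allF hpos (F := F) (w := upd z σ b) (T := (σ : ℝ))
        (hpos σ.2) hA
      exact ⟨b, hbG', r, hr, hIq⟩
    · push_neg at hA
      obtain ⟨y₁, hy₁, hfy₁⟩ := hA
      -- the maximal certificate scale within the cell
      have hSS1 := hwo {s : ℝ | ∃ y ∈ cell z σ b, f y ∉ F ∧ ((g y : ℝ)) = s}
        (by rintro s ⟨y, _, _, rfl⟩; exact (g y).2) ⟨g y₁, y₁, hy₁, hfy₁, rfl⟩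
      obtain ⟨m, ⟨ys, hys, hfys, hgys⟩, hmax⟩ := hSS1
      have hbound : ∀ y ∈ cell z σ b, f y ∉ F → (g y : ℝ) ≤ (g ys : ℝ) := by
        intro y hy hfy
        rw [hgys]
        exact hmax _ ⟨y, hy, hfy, rfl⟩
      obtain ⟨b1, _, r₀, hr₀, hIq₀⟩ := IH b hbG ys hys hfys ∅
      -- the coinduction family
      set P : QS S → ℝ → Prop := fun r t => Iq f r t ∨
        (t ≤ (σ : ℝ) ∧ ∃ (u : QS S) (tu : ℝ) (yh : QS S) (σh : S),
          r ∈ Reg u tu ∧ Reg u tu ⊆ cell z σ b ∧ t ≤ tu ∧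
          (∀ y ∈ Reg u tu, f y ∉ F → (g y : ℝ) ≤ (σh : ℝ)) ∧
          yh ∈ Reg u tu ∧ f yh ∉ F ∧ g yh = σh ∧ Iq f r (σh : ℝ) ∧
          qdist S r yh ≤ (σh : ℝ)) with hP
      have hpost : ∀ r₁ t₁, P r₁ t₁ → ∃ τ : ℝ, 0 < τ ∧ Cpt f r₁ τ ∧
          ∀ σs : S, τ ≤ (σs : ℝ) → (σs : ℝ) < t₁ → ∀ G₁ : Finset ℕ,
            ∃ c ∉ G₁, ∃ r' ∈ cell r₁ σs c, P r' σs := by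
        rintro r₁ t₁ (hIq | ⟨ht₁σ, u, tu, yh, σh, hrReg, hRegsub, ht₁tu, hbnd, hyhm, hyhF, hgyh, hIqh, hqd⟩)
        · obtain ⟨τ, hτ, hcpt, hslots⟩ := hIq.unfold
          refine ⟨τ, hτ, hcpt, fun σs h1 h2 G₁ => ?_⟩
          obtain ⟨c, hc, r', hr', hIq'⟩ := hslots σs h1 h2 G₁
          exact ⟨c, hc, r', hr', Or.inl hIq'⟩
        · obtain ⟨τ, hτ, hcpt, hslots⟩ := hIqh.unfold
          refine ⟨τ, hτ, hcpt, fun σs h1 h2 G₁ => ?_⟩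
          rcases lt_trichotomy ((σs : ℝ)) ((σh : ℝ)) with hlt3 | heq3 | hgt3
          · obtain ⟨c, hc, r', hr', hIq'⟩ := hslots σs h1 hlt3 G₁
            exact ⟨c, hc, r', hr', Or.inl hIq'⟩
          · -- the exact slot: use the maximal certificate of the enclosing region
            have hseq : σs = σh := Subtype.ext heq3
            subst hseq
            obtain ⟨c, hc, r', hr', hIq'⟩ := IH b hbG yh (hRegsub hyhm) hyhF G₁
            rw [hgyh] at hr' hIq'
            have hcells : cell yh σs c = cell r₁ σs c :=
              cell_eq_of_qdist_le (by rw [qdist_comm]; exact hqd) c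
            exact ⟨c, hc, r', hcells ▸ hr', Or.inl hIq'⟩
          · -- a slot above the maximal certificate scale
            obtain ⟨c, hc⟩ := exists_nat_notin G₁
            have hδsub : cell r₁ σs c ⊆ Reg u tu :=
              cell_subset_Reg' hrReg (lt_of_lt_of_le h2 ht₁tu)
            by_cases hAc : ∀ y ∈ cell r₁ σs c, f y ∈ F
            · obtain ⟨r', hr', hIq'⟩ := Iq_of_allF hpos (F := F) (w := upd r₁ σs c)
                (T := (σs : ℝ)) (hpos σs.2) hAc
              exact ⟨c, hc, r', hr', Or.inl hIq'⟩
            · push_neg at hAc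
              obtain ⟨y₂, hy₂, hfy₂⟩ := hAc
              have hSS2 := hwo {s : ℝ | ∃ y ∈ cell r₁ σs c, f y ∉ F ∧ ((g y : ℝ)) = s}
                (by rintro s ⟨y, _, _, rfl⟩; exact (g y).2) ⟨g y₂, y₂, hy₂, hfy₂, rfl⟩
              obtain ⟨mc, ⟨yc, hyc, hfyc, hgyc⟩, hmaxc⟩ := hSS2
              have hycσ : (g yc : ℝ) < (σs : ℝ) :=
                lt_of_le_of_lt (hbnd yc (hδsub hyc) hfyc) hgt3
              obtain ⟨c2, _, r', hr', hIq'⟩ := IH b hbG yc (hRegsub (hδsub hyc)) hfyc ∅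
              have hr'δ : r' ∈ cell r₁ σs c := by
                have h1' : cell yc (g yc) c2 ⊆ Reg yc (σs : ℝ) := cell_subset_Reg hycσ
                have h2' : Reg yc (σs : ℝ) = Reg (upd r₁ σs c) (σs : ℝ) := Reg_eq_of_mem hyc
                show r' ∈ Reg (upd r₁ σs c) ((σs : ℝ))
                rw [← h2']
                exact h1' hr' 
              refine ⟨c, hc, r', hr'δ, Or.inr ⟨le_of_lt (lt_of_lt_of_le h2 ht₁σ),
                upd r₁ σs c, (σs : ℝ), yc, g yc, hr'δ,
                subset_trans hδsub hRegsub, le_rfl, ?_, hyc, hfyc, rfl, hIq', ?_⟩⟩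
              · intro y hy hfy
                rw [hgyc]
                exact hmaxc _ ⟨y, hy, hfy, rfl⟩
              · rw [qdist_comm]
                exact qdist_le_of_mem_cell hpos hr'
      have hro : r₀ ∈ cell z σ b := by
        have h1' : cell ys (g ys) b1 ⊆ Reg ys (σ : ℝ) :=
          cell_subset_Reg (hlt b hbG ys hys hfys)
        have h2' : Reg ys (σ : ℝ) = Reg (upd z σ b) (σ : ℝ) := Reg_eq_of_mem hys
        show r₀ ∈ Reg (upd z σ b) ((σ : ℝ))
        rw [← h2']
        exact h1' hr₀
      refine ⟨b, hbG', r₀, hro, ?_⟩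
      refine ⟨P, Or.inr ⟨le_rfl, upd z σ b, (σ : ℝ), ys, g ys, hro,
        subset_rfl, le_rfl, hbound, hys, hfys, rfl, hIq₀, ?_⟩, hpost⟩
      rw [qdist_comm]
      exact qdist_le_of_mem_cell hpos hr₀
end
end Stmt3
namespace Stmt3
noncomputable section
open Classical

variable {S : Set ℝ}

/-! ### Source-side structure: truncation chains -/

def pt0 : QS S := ⟨fun _ => 0, by
  have : Function.support (fun (_ : S) => (0:ℕ)) = ∅ := Function.support_zero
  rw [this]; exact Set.finite_empty⟩

lemma ne_pt0_iff {x : QS S} : x ≠ pt0 ↔ ∃ s : S, x.1 s ≠ 0 := by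
  constructor
  · intro h
    by_contra hc
    push_neg at hc
    exact h (QS.ext_iff'.2 hc)
  · rintro ⟨s, hs⟩ rfl
    exact hs rfl

def ssize (x : QS S) : ℕ := x.2.toFinset.card

lemma exists_min_scale (x : QS S) (h : x ≠ pt0) :
    ∃ s : S, x.1 s ≠ 0 ∧ ∀ s' : S, x.1 s' ≠ 0 → (s : ℝ) ≤ (s' : ℝ) := by
  obtain ⟨s₁, hs₁⟩ := ne_pt0_iff.1 h
  obtain ⟨s, hs, hmin⟩ := Set.exists_min_image (Function.support x.1)
    (fun s => (s : ℝ)) x.2 ⟨s₁, hs₁⟩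
  exact ⟨s, hs, fun s' hs' => hmin s' hs'⟩

def msc (x : QS S) (h : x ≠ pt0) : S := (exists_min_scale x h).choose

lemma msc_supp (x : QS S) (h : x ≠ pt0) : x.1 (msc x h) ≠ 0 :=
  (exists_min_scale x h).choose_spec.1

lemma msc_min (x : QS S) (h : x ≠ pt0) : ∀ s : S, x.1 s ≠ 0 → ((msc x h : ℝ)) ≤ (s : ℝ) :=
  (exists_min_scale x h).choose_spec.2

lemma zero_of_lt_msc (x : QS S) (h : x ≠ pt0) {s : S} (hs : (s : ℝ) < (msc x h : ℝ)) :
    x.1 s = 0 := by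
  by_contra hc
  exact absurd (msc_min x h s hc) (not_le.2 hs)

def trunc (x : QS S) (h : x ≠ pt0) : QS S := upd x (msc x h) 0

lemma trunc_def (x : QS S) (h : x ≠ pt0) : trunc x h = upd x (msc x h) 0 := rfl

lemma trunc_eval_ge (x : QS S) (h : x ≠ pt0) {s : S} (hs : (msc x h : ℝ) < (s : ℝ)) :
    (trunc x h).1 s = x.1 s := by
  rw [trunc_def]
  exact upd_noteq x (fun he => absurd (congrArg (Subtype.val) he) (ne_of_gt hs)) 0

lemma trunc_eval_lt (x : QS S) (h : x ≠ pt0) {s : S} (hs : (s : ℝ) < (msc x h : ℝ)) :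
    (trunc x h).1 s = 0 := by
  rw [trunc_def, upd_noteq x (fun he => absurd (congrArg (Subtype.val) he) (ne_of_lt hs)) 0]
  exact zero_of_lt_msc x h hs

lemma qdist_trunc (x : QS S) (h : x ≠ pt0) :
    qdist S x (trunc x h) = (msc x h : ℝ) := by
  rw [trunc_def]
  apply qdist_eq_scale
  · rw [upd_same]
    exact msc_supp x h
  · intro s hs
    exact (trunc_eval_ge x h hs).symm

lemma ssize_trunc_lt (x : QS S) (h : x ≠ pt0) : ssize (trunc x h) < ssize x := by
  rw [ssize, ssize, trunc_def]
  apply Finset.card_lt_card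
  constructor
  · intro s hs
    rw [Set.Finite.mem_toFinset, Function.mem_support] at hs ⊢
    rcases eq_or_ne s (msc x h) with rfl | hne
    · exact absurd (upd_same x _ 0) hs
    · rwa [upd_noteq x hne 0] at hs
  · intro hsub
    have h1 : (msc x h) ∈ (x.2.toFinset) := by
      rw [Set.Finite.mem_toFinset, Function.mem_support]; exact msc_supp x h
    have h2 := hsub h1
    rw [Set.Finite.mem_toFinset, Function.mem_support] at h2
    exact h2 (upd_same x _ 0)

def tchain (x : QS S) : List (QS S) :=
  if h : x = pt0 then [pt0] else x :: tchain (trunc x h)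
termination_by ssize x
decreasing_by exact ssize_trunc_lt x h

lemma tchain_pt0 : tchain (pt0 : QS S) = [pt0] := by rw [tchain]; simp

lemma tchain_ne (x : QS S) (h : x ≠ pt0) : tchain x = x :: tchain (trunc x h) := by
  rw [tchain]; simp [h]

lemma mem_tchain_self (x : QS S) : x ∈ tchain x := by
  rcases eq_or_ne x pt0 with rfl | h
  · rw [tchain_pt0]; exact List.mem_singleton.2 rfl
  · rw [tchain_ne x h]; exact List.mem_cons_self

lemma tchain_sub (x : QS S) : ∀ y ∈ tchain x, tchain y ⊆ tchain x := by
  suffices h : ∀ (n : ℕ) (x : QS S), ssize x ≤ n → ∀ y ∈ tchain x, tchain y ⊆ tchain x from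
    h (ssize x) x le_rfl
  intro n
  induction n with
  | zero =>
    intro x hsz y hy
    have h : x = pt0 := by
      by_contra hc
      have h1 : (msc x hc) ∈ (x.2.toFinset) := by
        rw [Set.Finite.mem_toFinset, Function.mem_support]; exact msc_supp x hc
      have := Finset.card_pos.2 ⟨_, h1⟩
      rw [ssize] at hsz; omega
    subst h
    rw [tchain_pt0, List.mem_singleton] at hy
    subst hy
    exact fun a ha => ha
  | succ n IH =>
    intro x hsz y hy
    rcases eq_or_ne x pt0 with rfl | h
    · rw [tchain_pt0] at hy ⊢
      rw [List.mem_singleton] at hy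
      subst hy
      rw [tchain_pt0]
      exact fun a ha => ha
    · rw [tchain_ne x h] at hy ⊢
      rcases List.mem_cons.1 hy with rfl | hy'
      · rw [tchain_ne y h]
        exact fun a ha => ha
      · intro a ha
        have hsz' : ssize (trunc x h) ≤ n := by
          have := ssize_trunc_lt x h; omega
        exact List.mem_cons_of_mem _ (IH (trunc x h) hsz' y hy' ha)

lemma pt0_mem_tchain (x : QS S) : pt0 ∈ tchain x := by
  suffices h : ∀ (n : ℕ) (x : QS S), ssize x ≤ n → pt0 ∈ tchain x from h (ssize x) x le_rfl
  intro n
  induction n with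
  | zero =>
    intro x hsz
    have h : x = pt0 := by
      by_contra hc
      have h1 : (msc x hc) ∈ (x.2.toFinset) := by
        rw [Set.Finite.mem_toFinset, Function.mem_support]; exact msc_supp x hc
      have := Finset.card_pos.2 ⟨_, h1⟩
      rw [ssize] at hsz; omega
    subst h
    rw [tchain_pt0]; exact List.mem_singleton.2 rfl
  | succ n IH =>
    intro x hsz
    rcases eq_or_ne x pt0 with rfl | h
    · rw [tchain_pt0]; exact List.mem_singleton.2 rfl
    · rw [tchain_ne x h]
      have hsz' : ssize (trunc x h) ≤ n := by
        have := ssize_trunc_lt x h; omega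
      exact List.mem_cons_of_mem _ (IH (trunc x h) hsz')

/-- If `x''` agrees with `x` at all scales `≥ msc x`, then `x` is on the
truncation chain of `x''`. -/
lemma chain_reach (x : QS S) (hx : x ≠ pt0) :
    ∀ (n : ℕ) (x'' : QS S), ssize x'' ≤ n →
      (∀ s : S, ((msc x hx : ℝ)) ≤ (s : ℝ) → x''.1 s = x.1 s) → x ∈ tchain x'' := by
  intro n
  induction n with
  | zero =>
    intro x'' hsz hagree
    exfalso
    have hne : x'' ≠ pt0 := by
      rw [ne_pt0_iff]
      exact ⟨msc x hx, by rw [hagree _ le_rfl]; exact msc_supp x hx⟩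
    have : 0 < ssize x'' := by
      rw [ssize, Finset.card_pos]
      obtain ⟨s, hs⟩ := ne_pt0_iff.1 hne
      exact ⟨s, by rwa [Set.Finite.mem_toFinset, Function.mem_support]⟩
    omega
  | succ n IH =>
    intro x'' hsz hagree
    rcases eq_or_ne x'' x with rfl | hne
    · exact mem_tchain_self x''
    · -- there is a difference strictly below msc x
      have hdiff : ∃ s : S, x''.1 s ≠ x.1 s := by
        by_contra hc; push_neg at hc
        exact hne (QS.ext_iff'.2 hc)
      obtain ⟨sd, hsd⟩ := hdiff
      have hsdlt : (sd : ℝ) < (msc x hx : ℝ) := by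
        by_contra hc
        exact hsd (hagree sd (not_lt.1 hc))
      have hx''sd : x''.1 sd ≠ 0 := by
        rw [zero_of_lt_msc x hx hsdlt] at hsd
        exact hsd
      have hx''ne : x'' ≠ pt0 := ne_pt0_iff.2 ⟨sd, hx''sd⟩
      have hmlt : ((msc x'' hx''ne : ℝ)) < (msc x hx : ℝ) :=
        lt_of_le_of_lt (msc_min x'' hx''ne sd hx''sd) hsdlt
      have hagree' : ∀ s : S, ((msc x hx : ℝ)) ≤ (s : ℝ) → (trunc x'' hx''ne).1 s = x.1 s := by
        intro s hs
        rw [trunc_eval_ge x'' hx''ne (lt_of_lt_of_le hmlt hs)]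
        exact hagree s hs
      have hsz' : ssize (trunc x'' hx''ne) ≤ n := by
        have := ssize_trunc_lt x'' hx''ne
        omega
      rw [tchain_ne x'' hx''ne]
      exact List.mem_cons_of_mem _ (IH _ hsz' hagree')

end
end Stmt3
namespace Stmt3
noncomputable section
open Classical

variable {S : Set ℝ}

/-! ### Countability of `QS S` -/

lemma QS_countable (hcount : S.Countable) : Countable (QS S) := by
  haveI : Countable ↥S := hcount.to_subtype
  have hinj : Function.Injective
      (fun x : QS S => x.2.toFinset.image (fun s => (s, x.1 s)) : QS S → Finset (↥S × ℕ)) := by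
    intro x y hxy
    simp only at hxy
    apply QS.ext_iff'.2
    intro s
    by_cases hx : x.1 s = 0
    · by_cases hy : y.1 s = 0
      · rw [hx, hy]
      · exfalso
        have hmem : (s, y.1 s) ∈ y.2.toFinset.image (fun s => (s, y.1 s)) :=
          Finset.mem_image.2 ⟨s, by rwa [Set.Finite.mem_toFinset, Function.mem_support], rfl⟩
        rw [← hxy] at hmem
        obtain ⟨s', hs', heq⟩ := Finset.mem_image.1 hmem
        rw [Set.Finite.mem_toFinset, Function.mem_support] at hs'
        rw [Prod.mk.injEq] at heq
        rw [← heq.1] at hx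
        rw [← heq.2, hx] at hy
        exact hy rfl
    · have hmem : (s, x.1 s) ∈ x.2.toFinset.image (fun s => (s, x.1 s)) :=
        Finset.mem_image.2 ⟨s, by rwa [Set.Finite.mem_toFinset, Function.mem_support], rfl⟩
      rw [hxy] at hmem
      obtain ⟨s', hs', heq⟩ := Finset.mem_image.1 hmem
      rw [Prod.mk.injEq] at heq
      exact (heq.1 ▸ heq.2).symm
  exact Function.Injective.countable hinj

lemma QS_enum (hcount : S.Countable) : ∃ u : ℕ → QS S, Function.Surjective u := by
  haveI := QS_countable (S := S) hcount
  haveI : Nonempty (QS S) := ⟨pt0⟩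
  exact exists_surjective_nat (QS S)

end
end Stmt3
namespace Stmt3
noncomputable section
open Classical

variable {S : Set ℝ}

/-! ### The generic construction machine -/

abbrev Ent (S : Set ℝ) := QS S × QS S × ℝ

def domMem (l : List (Ent S)) (x : QS S) : Prop := ∃ e ∈ l, e.1 = x

def ChainCl (l : List (Ent S)) : Prop :=
  ∀ e ∈ l, ∀ y ∈ tchain e.1, domMem l y

def MSt (Inv : List (Ent S) → Prop) :=
  {l : List (Ent S) // Inv l ∧ ChainCl l ∧ domMem l pt0}

section Machine

variable (Inv : List (Ent S) → Prop)

lemma domMem_cons {l : List (Ent S)} {x : QS S} (h : domMem l x) (e : Ent S) :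
    domMem (e :: l) x := by
  obtain ⟨e', he', heq⟩ := h
  exact ⟨e', List.mem_cons_of_mem _ he', heq⟩

lemma chaincl_cons {l : List (Ent S)} (hcc : ChainCl l) {x : QS S} (hx : x ≠ pt0)
    (hd' : domMem l (trunc x hx)) (p : QS S) (τ : ℝ) : ChainCl ((x, p, τ) :: l) := by
  intro e he y hy
  rcases List.mem_cons.1 he with rfl | he'
  · simp only at hy
    rw [tchain_ne x hx] at hy
    rcases List.mem_cons.1 hy with h1 | hy'
    · exact ⟨(x, p, τ), List.mem_cons_self, h1.symm⟩
    · obtain ⟨e'', he'', he''eq⟩ := hd'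
      obtain ⟨e₃, he₃, he₃eq⟩ := hcc e'' he'' y (by rw [he''eq]; exact hy')
      exact ⟨e₃, List.mem_cons_of_mem _ he₃, he₃eq⟩
  · obtain ⟨e₃, he₃, he₃eq⟩ := hcc e he' y hy
    exact ⟨e₃, List.mem_cons_of_mem _ he₃, he₃eq⟩

variable (hext : ∀ l, Inv l → ChainCl l → ∀ x, (hx : x ≠ pt0) → ¬ domMem l x →
      domMem l (trunc x hx) → ∃ p τ, Inv ((x, p, τ) :: l))

def insChain (x : QS S) (s : MSt Inv) : MSt Inv :=
  if hx : x = pt0 then s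
  else
    let s' := insChain (trunc x hx) s
    if hd : domMem s'.1 x then s'
    else if hd' : domMem s'.1 (trunc x hx) then
      let h := hext s'.1 s'.2.1 s'.2.2.1 x hx hd hd'
      ⟨(x, h.choose, h.choose_spec.choose) :: s'.1,
        h.choose_spec.choose_spec, chaincl_cons s'.2.2.1 hx hd' _ _,
        domMem_cons s'.2.2.2 _⟩
    else s'
termination_by ssize x
decreasing_by exact ssize_trunc_lt x hx

lemma insChain_mono : ∀ (n : ℕ) (x : QS S), ssize x ≤ n → ∀ (s : MSt Inv),
    ∀ e ∈ s.1, e ∈ (insChain Inv hext x s).1 := by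
  intro n
  induction n with
  | zero =>
    intro x hsz s e he
    have hx : x = pt0 := by
      by_contra hc
      have h1 : (msc x hc) ∈ (x.2.toFinset) := by
        rw [Set.Finite.mem_toFinset, Function.mem_support]; exact msc_supp x hc
      have := Finset.card_pos.2 ⟨_, h1⟩
      rw [ssize] at hsz; omega
    rw [insChain, dif_pos hx]
    exact he
  | succ n IH =>
    intro x hsz s e he
    rw [insChain]
    rcases eq_or_ne x pt0 with rfl | hx
    · rw [dif_pos rfl]; exact he
    · rw [dif_neg hx]
      have hsz' : ssize (trunc x hx) ≤ n := by have := ssize_trunc_lt x hx; omega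
      have he' := IH (trunc x hx) hsz' s e he
      by_cases hd : domMem (insChain Inv hext (trunc x hx) s).1 x
      · simp only [dif_pos hd]; exact he'
      · simp only [dif_neg hd]
        by_cases hd' : domMem (insChain Inv hext (trunc x hx) s).1 (trunc x hx)
        · erw [dif_pos hd']
          exact List.mem_cons_of_mem _ he'
        · erw [dif_neg hd']; exact he'

lemma domMem_mono {l l' : List (Ent S)} (h : ∀ e ∈ l, e ∈ l') {x : QS S}
    (hd : domMem l x) : domMem l' x := by
  obtain ⟨e, he, heq⟩ := hd
  exact ⟨e, h e he, heq⟩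

lemma insChain_mem : ∀ (n : ℕ) (x : QS S), ssize x ≤ n → ∀ (s : MSt Inv),
    domMem (insChain Inv hext x s).1 x := by
  intro n
  induction n with
  | zero =>
    intro x hsz s
    have hx : x = pt0 := by
      by_contra hc
      have h1 : (msc x hc) ∈ (x.2.toFinset) := by
        rw [Set.Finite.mem_toFinset, Function.mem_support]; exact msc_supp x hc
      have := Finset.card_pos.2 ⟨_, h1⟩
      rw [ssize] at hsz; omega
    subst hx
    rw [insChain, dif_pos rfl]
    exact s.2.2.2
  | succ n IH =>
    intro x hsz s
    rw [insChain]
    rcases eq_or_ne x pt0 with rfl | hx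
    · rw [dif_pos rfl]
      exact s.2.2.2
    · rw [dif_neg hx]
      have hsz' : ssize (trunc x hx) ≤ n := by have := ssize_trunc_lt x hx; omega
      by_cases hd : domMem (insChain Inv hext (trunc x hx) s).1 x
      · simp only [dif_pos hd]; exact hd
      · simp only [dif_neg hd]
        have hd' : domMem (insChain Inv hext (trunc x hx) s).1 (trunc x hx) :=
          IH (trunc x hx) hsz' s
        erw [dif_pos hd']
        exact ⟨_, List.mem_cons_self, rfl⟩

def stage (s0 : MSt Inv) (u : ℕ → QS S) : ℕ → MSt Inv
  | 0 => s0
  | n + 1 => insChain Inv hext (u n) (stage s0 u n)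

lemma stage_mono (s0 : MSt Inv) (u : ℕ → QS S) {m n : ℕ} (h : m ≤ n) :
    ∀ e ∈ (stage Inv hext s0 u m).1, e ∈ (stage Inv hext s0 u n).1 := by
  induction n with
  | zero =>
    intro e he
    have : m = 0 := by omega
    subst this; exact he
  | succ n IH =>
    intro e he
    rcases Nat.lt_or_ge m (n+1) with h1 | h2
    · have hle : m ≤ n := by omega
      exact insChain_mono Inv hext (ssize (u n)) (u n) le_rfl _ e (IH hle e he)
    · have : m = n + 1 := by omega
      subst this; exact he

/-- The generic machine: given an extendable invariant, there is a total map
realising it. -/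
lemma machine (hcount : S.Countable)
    (hext : ∀ l, Inv l → ChainCl l → ∀ x, (hx : x ≠ pt0) → ¬ domMem l x →
      domMem l (trunc x hx) → ∃ p τ, Inv ((x, p, τ) :: l))
    (hinit : ∃ p τ, Inv [(pt0, p, τ)] ∧ ChainCl [(pt0, p, τ)] ∧ domMem [(pt0, p, τ)] pt0) :
    ∃ (e : QS S → QS S) (T : QS S → ℝ),
      ∀ x y : QS S, ∃ l, Inv l ∧ (x, e x, T x) ∈ l ∧ (y, e y, T y) ∈ l := by
  obtain ⟨u, hu⟩ := QS_enum hcount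
  obtain ⟨p₀, τ₀, h₀⟩ := hinit
  set s0 : MSt Inv := ⟨[(pt0, p₀, τ₀)], h₀⟩ with hs0
  set st : ℕ → MSt Inv := stage Inv hext s0 u with hst
  have hidx : ∀ x : QS S, ∃ n : ℕ, u n = x := fun x => hu x
  have hin : ∀ x : QS S, ∃ ent ∈ (st ((hidx x).choose + 1)).1, ent.1 = x := by
    intro x
    have h1 : domMem (st ((hidx x).choose + 1)).1 (u ((hidx x).choose)) := by
      show domMem (insChain Inv hext (u (hidx x).choose) (st (hidx x).choose)).1 _
      exact insChain_mem Inv hext _ _ le_rfl _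
    rwa [(hidx x).choose_spec] at h1
  refine ⟨fun x => (hin x).choose.2.1, fun x => (hin x).choose.2.2, ?_⟩
  intro x y
  set nx := (hidx x).choose + 1
  set ny := (hidx y).choose + 1
  refine ⟨(st (max nx ny)).1, (st (max nx ny)).2.1, ?_, ?_⟩
  · have h1 := (hin x).choose_spec
    have h2 : (hin x).choose = (x, (hin x).choose.2.1, (hin x).choose.2.2) := by
      have he : (hin x).choose = ((hin x).choose.1, (hin x).choose.2.1, (hin x).choose.2.2) := rfl
      rw [he]
      rw [h1.2]
    rw [← h2]
    exact stage_mono Inv hext s0 u (le_max_left nx ny) _ h1.1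
  · have h1 := (hin y).choose_spec
    have h2 : (hin y).choose = (y, (hin y).choose.2.1, (hin y).choose.2.2) := by
      have he : (hin y).choose = ((hin y).choose.1, (hin y).choose.2.1, (hin y).choose.2.2) := rfl
      rw [he]
      rw [h1.2]
    rw [← h2]
    exact stage_mono Inv hext s0 u (le_max_right nx ny) _ h1.1

end Machine
end
end Stmt3
namespace Stmt3
noncomputable section
open Classical

variable {S : Set ℝ}

/-! ### The isometric extension step -/

lemma isoext (hpos : S ⊆ Set.Ioi 0) {l : List (Ent S)}
    (hiso : ∀ e ∈ l, ∀ e' ∈ l, qdist S e.2.1 e'.2.1 = qdist S e.1 e'.1)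
    (hcc : ChainCl l)
    {x : QS S} (hx : x ≠ pt0) (hxnew : ¬ domMem l x)
    {ep : Ent S} (hep : ep ∈ l) (heppar : ep.1 = trunc x hx)
    {p : QS S} {b : ℕ} (hp : p ∈ cell ep.2.1 (msc x hx) b)
    (hbG : ∀ e ∈ l, e.2.1.1 (msc x hx) ≠ b) :
    ∀ e ∈ l, qdist S p e.2.1 = qdist S x e.1 := by
  set σx := msc x hx with hσx
  have hqxp : qdist S x ep.1 = (σx : ℝ) := by rw [heppar]; exact qdist_trunc x hx
  have hbppne : b ≠ ep.2.1.1 σx := fun h => (hbG ep hep) h.symm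
  have hqppp : qdist S ep.2.1 p = (σx : ℝ) := qdist_center_cell hbppne hp
  intro e he
  rcases lt_trichotomy (qdist S x e.1) ((σx : ℝ)) with hlt | heq | hgt
  · -- impossible: x would be on the chain of e.1
    exfalso
    have hne : e.1 ≠ x := fun h => hxnew ⟨e, he, h⟩
    have hagree : ∀ s : S, ((σx : ℝ)) ≤ (s : ℝ) → e.1.1 s = x.1 s := by
      intro s hs
      exact (eq_of_qdist_lt (lt_of_lt_of_le hlt hs)).symm
    have hxin := chain_reach x hx (ssize e.1) e.1 le_rfl hagree
    obtain ⟨e', he', heq'⟩ := hcc e he x hxin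
    exact hxnew ⟨e', he', heq'⟩
  · -- distance exactly σx
    rcases lt_trichotomy (qdist S ep.1 e.1) ((σx : ℝ)) with hlt2 | heq2 | hgt2
    · have h2 : qdist S ep.2.1 e.2.1 = qdist S ep.1 e.1 := hiso ep hep e he
      have h3 : qdist S e.2.1 ep.2.1 < qdist S ep.2.1 p := by
        rw [qdist_comm e.2.1 ep.2.1, h2, hqppp]; exact hlt2
      have h4 := qdist_ultra_eq hpos h3
      rw [qdist_comm]
      rw [h4, hqppp, heq]
    · -- e's target is in another cell at scale σx
      have h2 : qdist S ep.2.1 e.2.1 = (σx : ℝ) := by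
        rw [hiso ep hep e he]; exact heq2
      have hecell : e.2.1 ∈ cell ep.2.1 σx (e.2.1.1 σx) := by
        apply mem_cell_iff.2
        refine ⟨rfl, fun s hs => ?_⟩
        exact (eq_of_qdist_lt (h2 ▸ hs)).symm
      have := qdist_eq_of_cells (hbG e he) hecell hp
      rw [qdist_comm] at this
      rw [this, heq]
    · exfalso
      have h3 : qdist S x ep.1 < qdist S ep.1 e.1 := by rw [hqxp]; exact hgt2
      have := qdist_ultra_eq hpos h3
      rw [this] at heq
      exact absurd heq (ne_of_gt hgt2)
  · -- distance above σx
    have h1 : qdist S ep.1 e.1 = qdist S x e.1 := by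
      apply qdist_ultra_eq hpos
      rw [qdist_comm ep.1 x, hqxp]
      exact hgt
    have h2 : qdist S ep.2.1 e.2.1 = qdist S x e.1 := by rw [hiso ep hep e he]; exact h1
    have h3 : qdist S p ep.2.1 < qdist S ep.2.1 e.2.1 := by
      rw [qdist_comm p ep.2.1, hqppp, h2]; exact hgt
    rw [qdist_ultra_eq hpos h3, h2]

/-! ### Clearance -/

def clr (s0 : S) (x : QS S) : ℝ := if h : x = pt0 then (s0 : ℝ) + 1 else (msc x h : ℝ)

lemma clr_pt0 (s0 : S) : clr s0 (pt0 : QS S) = (s0 : ℝ) + 1 := dif_pos rfl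

lemma clr_ne (s0 : S) {x : QS S} (h : x ≠ pt0) : clr s0 x = (msc x h : ℝ) := dif_neg h

lemma msc_lt_clr_trunc (s0 : S) (hmax : ∀ s ∈ S, s ≤ (s0 : ℝ)) {x : QS S} (hx : x ≠ pt0) :
    (msc x hx : ℝ) < clr s0 (trunc x hx) := by
  rcases eq_or_ne (trunc x hx) pt0 with h | h
  · rw [h, clr_pt0]
    have := hmax _ (msc x hx).2
    linarith
  · rw [clr_ne s0 h]
    rcases lt_trichotomy ((msc x hx : ℝ)) ((msc (trunc x hx) h : ℝ)) with h1 | h1 | h1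
    · exact h1
    · exfalso
      have h2 : msc (trunc x hx) h = msc x hx := Subtype.ext h1.symm
      have := msc_supp (trunc x hx) h
      rw [h2, trunc_def, upd_same] at this
      exact this rfl
    · exfalso
      have := msc_supp (trunc x hx) h
      rw [trunc_eval_lt x hx h1] at this
      exact this rfl

lemma msc_le_smax (s0 : S) (hmax : ∀ s ∈ S, s ≤ (s0 : ℝ)) {x : QS S} (hx : x ≠ pt0) :
    (msc x hx : ℝ) < clr s0 pt0 := by
  rw [clr_pt0]
  have := hmax _ (msc x hx).2
  linarith

/-! ### The injective branch -/

def InvI (f : QS S → ℕ) (s0 : S) (l : List (Ent S)) : Prop :=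
  (∀ e ∈ l, ∀ e' ∈ l, qdist S e.2.1 e'.2.1 = qdist S e.1 e'.1) ∧
  (∀ e ∈ l, ∀ e' ∈ l, e.1 ≠ e'.1 → f e.2.1 ≠ f e'.2.1) ∧
  (∀ e ∈ l, ∀ σ' : S, (σ' : ℝ) < clr s0 e.1 → ¬ Bad f e.2.1 σ')

lemma extInj (hpos : S ⊆ Set.Ioi 0) (s0 : S) (hmax : ∀ s ∈ S, s ≤ (s0 : ℝ))
    {f : QS S → ℕ} :
    ∀ l, InvI f s0 l → ChainCl l → ∀ x, (hx : x ≠ pt0) → ¬ domMem l x →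
      domMem l (trunc x hx) → ∃ p τ, InvI f s0 ((x, p, τ) :: l) := by
  intro l hInv hcc x hx hnew hpar
  obtain ⟨ep, hep, heppar⟩ := hpar
  set σx := msc x hx with hσx
  have hσclr : (σx : ℝ) < clr s0 ep.1 := by
    rw [heppar]
    rcases eq_or_ne (trunc x hx) pt0 with h | h
    · rw [h]; exact msc_le_smax s0 hmax hx
    · exact msc_lt_clr_trunc s0 hmax hx
  have hgoodp := hInv.2.2 ep hep σx hσclr
  have hnb := notBad_unfold hgoodp ((l.map (fun e => f e.2.1)).toFinset)
    ((l.map (fun e => e.2.1.1 σx)).toFinset)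
  obtain ⟨b, hbidx, y, hycell, hyF, hygood⟩ := hnb
  have hbG : ∀ e ∈ l, e.2.1.1 σx ≠ b := by
    intro e he h
    exact hbidx (List.mem_toFinset.2 (List.mem_map.2 ⟨e, he, h⟩))
  have hiso := isoext hpos hInv.1 hcc hx hnew hep heppar hycell hbG
  refine ⟨y, 0, ?_, ?_, ?_⟩
  · -- isometry
    intro e he e' he'
    rcases List.mem_cons.1 he with rfl | he2 <;> rcases List.mem_cons.1 he' with h3 | he3
    · rw [h3]
      show qdist S y y = qdist S x x
      rw [qdist_self, qdist_self]
    · exact hiso e' he3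
    · rw [h3]
      show qdist S e.2.1 y = qdist S e.1 x
      rw [qdist_comm e.2.1 y, qdist_comm e.1 x]
      exact hiso e he2
    · exact hInv.1 e he2 e' he3
  · -- distinct values
    intro e he e' he' hne
    rcases List.mem_cons.1 he with rfl | he2 <;> rcases List.mem_cons.1 he' with h3 | he3
    · rw [h3] at hne; exact absurd rfl hne
    · intro h
      apply hyF
      rw [h]
      exact List.mem_toFinset.2 (List.mem_map.2 ⟨e', he3, rfl⟩)
    · rw [h3]
      intro h
      apply hyF
      rw [← h]
      exact List.mem_toFinset.2 (List.mem_map.2 ⟨e, he2, rfl⟩)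
    · exact hInv.2.1 e he2 e' he3 hne
  · -- goodness
    intro e he σ' hσ'
    rcases List.mem_cons.1 he with rfl | he2
    · simp only at hσ' ⊢
      rw [clr_ne s0 hx] at hσ'
      exact hygood σ' hσ'
    · exact hInv.2.2 e he2 σ' hσ'

lemma injective_copy (hpos : S ⊆ Set.Ioi 0) (hcount : S.Countable) (s0 : S)
    (hmax : ∀ s ∈ S, s ≤ (s0 : ℝ)) {f : QS S → ℕ}
    (hroot : ∃ r₀, ∀ σ : S, ¬ Bad f r₀ σ) :
    ∃ X : Set (QS S), IsCopyOfQS S X ∧ Set.InjOn f X := by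
  obtain ⟨r₀, hr₀⟩ := hroot
  have hinit : InvI f s0 [(pt0, r₀, 0)] ∧ ChainCl [(pt0, r₀, 0)] ∧
      domMem [(pt0, r₀, 0)] pt0 := by
    refine ⟨⟨?_, ?_, ?_⟩, ?_, ⟨_, List.mem_singleton.2 rfl, rfl⟩⟩
    · intro e he e' he'
      rw [List.mem_singleton] at he he'
      rw [he, he']
      show qdist S r₀ r₀ = qdist S pt0 pt0
      rw [qdist_self, qdist_self]
    · intro e he e' he' hne
      rw [List.mem_singleton] at he he'
      rw [he, he'] at hne
      exact absurd rfl hne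
    · intro e he σ' _
      rw [List.mem_singleton] at he
      rw [he]
      exact hr₀ σ'
    · intro e he y hy
      rw [List.mem_singleton] at he
      rw [he] at hy
      simp only at hy
      rw [tchain_pt0, List.mem_singleton] at hy
      rw [hy]
      exact ⟨(pt0, r₀, 0), List.mem_singleton.2 rfl, rfl⟩
  obtain ⟨e, T, hpair⟩ := machine (InvI f s0) hcount
    (extInj hpos s0 hmax) ⟨r₀, 0, hinit⟩
  have hisoe : ∀ x y : QS S, qdist S (e x) (e y) = qdist S x y := by
    intro x y
    obtain ⟨l, hInv, hxl, hyl⟩ := hpair x y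
    exact hInv.1 _ hxl _ hyl
  have hinj : Function.Injective e := by
    intro x y h
    by_contra hne
    have h1 := hisoe x y
    rw [h, qdist_self] at h1
    exact absurd h1.symm (ne_of_gt (qdist_pos hpos hne))
  refine ⟨Set.range e, ⟨e, hinj, rfl, hisoe⟩, ?_⟩
  rintro a ⟨xa, rfl⟩ b ⟨xb, rfl⟩ hfab
  rcases eq_or_ne xa xb with rfl | hne
  · rfl
  · exfalso
    obtain ⟨l, hInv, hxl, hyl⟩ := hpair xa xb
    exact hInv.2.1 _ hxl _ hyl hne hfab

end
end Stmt3
namespace Stmt3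
noncomputable section
open Classical

variable {S : Set ℝ}

/-! ### The continuity branch -/

lemma no_close {l : List (Ent S)} (hcc : ChainCl l) {x : QS S} (hx : x ≠ pt0)
    (hnew : ¬ domMem l x) : ∀ e ∈ l, ¬ qdist S x e.1 < (msc x hx : ℝ) := by
  intro e he hlt
  have hne : e.1 ≠ x := fun h => hnew ⟨e, he, h⟩
  have hagree : ∀ s : S, ((msc x hx : ℝ)) ≤ (s : ℝ) → e.1.1 s = x.1 s := by
    intro s hs
    exact (eq_of_qdist_lt (lt_of_lt_of_le hlt hs)).symm
  have hxin := chain_reach x hx (ssize e.1) e.1 le_rfl hagree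
  exact hnew (hcc e he x hxin)

def InvC (f : QS S → ℕ) (s0 : S) (l : List (Ent S)) : Prop :=
  (∀ e ∈ l, ∀ e' ∈ l, e.1 = e'.1 → e = e') ∧
  (∀ e ∈ l, ∀ e' ∈ l, qdist S e.2.1 e'.2.1 = qdist S e.1 e'.1) ∧
  (∀ e ∈ l, 0 < e.2.2 ∧ Cpt f e.2.1 e.2.2 ∧ e.2.2 ≤ clr s0 e.1 ∧
    (∀ σ : S, e.2.2 ≤ (σ : ℝ) → (σ : ℝ) < clr s0 e.1 → ∀ G : Finset ℕ,
      ∃ b ∉ G, ∃ r' ∈ cell e.2.1 σ b, Iq f r' (σ : ℝ))) ∧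
  (∀ e ∈ l, ∀ e' ∈ l, e.1 ≠ e'.1 → qdist S e.1 e'.1 < e.2.2 →
    f e'.2.1 = f e.2.1 ∧ e'.2.2 = clr s0 e'.1)

lemma extCont (hpos : S ⊆ Set.Ioi 0) (s0 : S) (hmax : ∀ s ∈ S, s ≤ (s0 : ℝ))
    {f : QS S → ℕ} :
    ∀ l, InvC f s0 l → ChainCl l → ∀ x, (hx : x ≠ pt0) → ¬ domMem l x →
      domMem l (trunc x hx) → ∃ p τ, InvC f s0 ((x, p, τ) :: l) := by
  intro l hInv hcc x hx hnew hpar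
  obtain ⟨hfun, hiso, hstate, hlock⟩ := hInv
  obtain ⟨ep, hep, heppar⟩ := hpar
  set σx := msc x hx with hσx
  have hσclr : (σx : ℝ) < clr s0 ep.1 := by
    rw [heppar]
    rcases eq_or_ne (trunc x hx) pt0 with h | h
    · rw [h]; exact msc_le_smax s0 hmax hx
    · exact msc_lt_clr_trunc s0 hmax hx
  obtain ⟨hτp, hcptp, hτlep, hslotsp⟩ := hstate ep hep
  set idxs : Finset ℕ := (l.map (fun e => e.2.1.1 σx)).toFinset with hidxs
  -- produce the new point and its lock threshold, depending on mode
  have hmain : ∃ (p : QS S) (τ : ℝ) (b : ℕ), b ∉ idxs ∧ p ∈ cell ep.2.1 σx b ∧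
      0 < τ ∧ Cpt f p τ ∧ τ ≤ (σx : ℝ) ∧
      (∀ σ : S, τ ≤ (σ : ℝ) → (σ : ℝ) < (σx : ℝ) → ∀ G : Finset ℕ,
        ∃ b' ∉ G, ∃ r' ∈ cell p σ b', Iq f r' (σ : ℝ)) ∧
      ((σx : ℝ) < ep.2.2 → (f p = f ep.2.1 ∧ τ = (σx : ℝ))) ∧
      (¬ ((σx : ℝ) < ep.2.2) → True) := by
    rcases lt_or_ge ((σx : ℝ)) ep.2.2 with hA | hB
    · -- lock mode
      obtain ⟨b, hb, r', hr', hfr', hcpt'⟩ := hcptp.unfold σx hA idxs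
      refine ⟨r', (σx : ℝ), b, hb, hr', hpos σx.2, hcpt', le_rfl, ?_, fun _ => ⟨hfr', rfl⟩,
        fun _ => trivial⟩
      intro σ h1 h2 G
      exact absurd (lt_of_le_of_lt h1 h2) (lt_irrefl _)
    · -- open mode
      obtain ⟨b, hb, r', hr', hIq'⟩ := hslotsp σx hB hσclr idxs
      obtain ⟨τ', hτ', hcpt', hslots'⟩ := hIq'.unfold
      refine ⟨r', min τ' (σx : ℝ), b, hb, hr', lt_min hτ' (hpos σx.2),
        hcpt'.mono (min_le_left _ _), min_le_right _ _, ?_,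
        fun h => absurd h (not_lt.2 hB), fun _ => trivial⟩
      intro σ h1 h2 G
      rcases le_or_gt τ' ((σ : ℝ)) with h3 | h3
      · exact hslots' σ h3 h2 G
      · exfalso
        rcases min_cases τ' ((σx : ℝ)) with ⟨hm, _⟩ | ⟨hm, _⟩
        · rw [hm] at h1; exact absurd (lt_of_le_of_lt h1 h3) (lt_irrefl _)
        · rw [hm] at h1; exact absurd (lt_of_le_of_lt h1 h2) (lt_irrefl _)
  obtain ⟨p, τ, b, hbidx, hpcell, hτpos, hcptnew, hτleσ, hslotsnew, hlockmode, -⟩ := hmain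
  have hbG : ∀ e ∈ l, e.2.1.1 σx ≠ b := by
    intro e he h
    exact hbidx (List.mem_toFinset.2 (List.mem_map.2 ⟨e, he, h⟩))
  have hisonew := isoext hpos hiso hcc hx hnew hep heppar hpcell hbG
  have hnoclose := no_close hcc hx hnew
  refine ⟨p, τ, ?_, ?_, ?_, ?_⟩
  · -- functional
    intro e he e' he' heq
    rcases List.mem_cons.1 he with rfl | he2 <;> rcases List.mem_cons.1 he' with h3 | he3
    · rw [h3]
    · exfalso; exact hnew ⟨e', he3, by rw [← heq]⟩
    · exfalso; apply hnew; refine ⟨e, he2, ?_⟩; rw [h3] at heq; exact heq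
    · exact hfun e he2 e' he3 heq
  · -- isometry
    intro e he e' he'
    rcases List.mem_cons.1 he with rfl | he2 <;> rcases List.mem_cons.1 he' with h3 | he3
    · rw [h3]
      show qdist S p p = qdist S x x
      rw [qdist_self, qdist_self]
    · exact hisonew e' he3
    · rw [h3]
      show qdist S e.2.1 p = qdist S e.1 x
      rw [qdist_comm e.2.1 p, qdist_comm e.1 x]
      exact hisonew e he2
    · exact hiso e he2 e' he3
  · -- state
    intro e he
    rcases List.mem_cons.1 he with rfl | he2
    · refine ⟨hτpos, hcptnew, ?_, ?_⟩
      · show τ ≤ clr s0 x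
        rw [clr_ne s0 hx]
        exact hτleσ
      · intro σ h1 h2
        rw [clr_ne s0 hx] at h2
        exact hslotsnew σ h1 h2
    · exact hstate e he2
  · -- lock clause
    intro e he e' he' hne hd
    rcases List.mem_cons.1 he with rfl | he2 <;> rcases List.mem_cons.1 he' with h3 | he3
    · exfalso; rw [h3] at hne; exact hne rfl
    · -- (new, old): impossible, old points are at distance ≥ σx
      exfalso
      have : qdist S x e'.1 < (σx : ℝ) := lt_of_lt_of_le hd hτleσ
      exact hnoclose e' he3 this
    · -- (old, new)
      rw [h3] at hd hne ⊢
      simp only at hd hne ⊢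
      -- analysis: conclude we are in lock mode
      have hkey : (σx : ℝ) < ep.2.2 ∧ f e.2.1 = f ep.2.1 := by
        rcases eq_or_ne e ep with rfl | hnep
        · -- e is the parent
          have : qdist S e.1 x = (σx : ℝ) := by
            rw [qdist_comm, heppar]; exact qdist_trunc x hx
          rw [this] at hd
          exact ⟨hd, rfl⟩
        · have hne2 : e.1 ≠ ep.1 := fun h => hnep (hfun e he2 ep hep h)
          have hqxep : qdist S x ep.1 = (σx : ℝ) := by rw [heppar]; exact qdist_trunc x hx
          have hcase : qdist S e.1 ep.1 < e.2.2 := by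
            rcases lt_trichotomy (qdist S e.1 ep.1) ((σx : ℝ)) with h4 | h4 | h4
            · -- then qdist e.1 x = σx
              have h5 : qdist S e.1 ep.1 < qdist S ep.1 x := by
                rw [qdist_comm ep.1 x, hqxep]; exact h4
              have h6 := qdist_ultra_eq hpos h5
              have h7 : qdist S e.1 x = (σx : ℝ) := by
                rw [h6, qdist_comm ep.1 x, hqxep]
              rw [h7] at hd
              exact lt_trans h4 hd
            · rw [h4]
              have h7 : ¬ qdist S x e.1 < (σx : ℝ) := hnoclose e he2
              have h8 : qdist S e.1 x ≤ (σx : ℝ) := by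
                have := qdist_ultra hpos e.1 ep.1 x
                rw [h4, qdist_comm ep.1 x, hqxep] at this
                simpa using this
              have h9 : qdist S e.1 x = (σx : ℝ) := by
                rcases lt_or_eq_of_le h8 with h | h
                · exfalso; rw [qdist_comm] at h7; exact h7 h
                · exact h
              rw [← h9]; exact hd
            · have h5 : qdist S x ep.1 < qdist S ep.1 e.1 := by
                rw [hqxep, qdist_comm ep.1 e.1]; exact h4
              have h6 := qdist_ultra_eq hpos h5
              have h7 : qdist S e.1 x = qdist S e.1 ep.1 := by
                rw [qdist_comm e.1 x, h6, qdist_comm e.1 ep.1]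
              rw [h7] at hd
              exact hd
          obtain ⟨hfpe, hτe⟩ := hlock e he2 ep hep hne2 hcase
          -- so the parent is fully locked; σx < clr ep.1 = ep.2.2
          have h8 : (σx : ℝ) < ep.2.2 := by rw [hτe]; exact hσclr
          -- and values propagate from parent
          refine ⟨h8, hfpe.symm⟩
      obtain ⟨hfp, hτeq⟩ := hlockmode hkey.1
      constructor
      · rw [hfp, ← hkey.2]
      · show τ = clr s0 x
        rw [clr_ne s0 hx, hτeq]
    · exact hlock e he2 e' he3 hne hd

end
end Stmt3
namespace Stmt3
noncomputable section
open Classical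

variable {S : Set ℝ}

lemma continuity_copy (hpos : S ⊆ Set.Ioi 0) (hcount : S.Countable) (s0 : S)
    (hmax : ∀ s ∈ S, s ≤ (s0 : ℝ)) {f : QS S → ℕ}
    (hroot : ∃ r₀, Iq f r₀ ((s0 : ℝ) + 1)) :
    ∃ X : Set (QS S), IsCopyOfQS S X ∧
      (∀ x ∈ X, ∃ ε > (0:ℝ), ∀ y ∈ X, qdist S x y < ε → f y = f x) := by
  obtain ⟨r₀, hr₀⟩ := hroot
  obtain ⟨τ', hτ', hcpt', hslots'⟩ := hr₀.unfold
  set τ₀ := min τ' ((s0 : ℝ) + 1) with hτ₀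
  have hs0pos : (0:ℝ) < (s0 : ℝ) := hpos s0.2
  have hinit : InvC f s0 [(pt0, r₀, τ₀)] ∧ ChainCl [(pt0, r₀, τ₀)] ∧
      domMem [(pt0, r₀, τ₀)] pt0 := by
    refine ⟨⟨?_, ?_, ?_, ?_⟩, ?_, ⟨_, List.mem_singleton.2 rfl, rfl⟩⟩
    · intro e he e' he'
      rw [List.mem_singleton] at he he'
      rw [he, he']
      intro _; rfl
    · intro e he e' he'
      rw [List.mem_singleton] at he he'
      rw [he, he']
      show qdist S r₀ r₀ = qdist S pt0 pt0
      rw [qdist_self, qdist_self]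
    · intro e he
      rw [List.mem_singleton] at he
      rw [he]
      refine ⟨lt_min hτ' (by linarith), hcpt'.mono (min_le_left _ _), ?_, ?_⟩
      · show τ₀ ≤ clr s0 pt0
        rw [clr_pt0]
        exact min_le_right _ _
      · intro σ h1 h2 G
        rcases le_or_gt τ' ((σ : ℝ)) with h3 | h3
        · refine hslots' σ h3 ?_ G
          show (σ : ℝ) < (s0 : ℝ) + 1
          have := hmax _ σ.2
          linarith
        · exfalso
          rcases min_cases τ' ((s0 : ℝ) + 1) with ⟨hm, _⟩ | ⟨hm, _⟩
          · rw [hτ₀, hm] at h1; exact absurd (lt_of_le_of_lt h1 h3) (lt_irrefl _)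
          · have h1' : (s0 : ℝ) + 1 ≤ (σ : ℝ) := by rw [hτ₀, hm] at h1; exact h1
            have := hmax _ σ.2
            linarith
    · intro e he e' he' hne
      rw [List.mem_singleton] at he he'
      rw [he, he'] at hne
      exact absurd rfl hne
    · intro e he y hy
      rw [List.mem_singleton] at he
      rw [he] at hy
      simp only at hy
      rw [tchain_pt0, List.mem_singleton] at hy
      rw [hy]
      exact ⟨(pt0, r₀, τ₀), List.mem_singleton.2 rfl, rfl⟩
  obtain ⟨e, T, hpair⟩ := machine (InvC f s0) hcount
    (extCont hpos s0 hmax) ⟨r₀, τ₀, hinit⟩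
  have hisoe : ∀ x y : QS S, qdist S (e x) (e y) = qdist S x y := by
    intro x y
    obtain ⟨l, hInv, hxl, hyl⟩ := hpair x y
    exact hInv.2.1 _ hxl _ hyl
  have hinj : Function.Injective e := by
    intro x y h
    by_contra hne
    have h1 := hisoe x y
    rw [h, qdist_self] at h1
    exact absurd h1.symm (ne_of_gt (qdist_pos hpos hne))
  refine ⟨Set.range e, ⟨e, hinj, rfl, hisoe⟩, ?_⟩
  rintro a ⟨xa, rfl⟩
  obtain ⟨l₀, hInv₀, hxl₀, _⟩ := hpair xa xa
  refine ⟨T xa, (hInv₀.2.2.1 _ hxl₀).1, ?_⟩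
  rintro b ⟨xb, rfl⟩ hq
  rcases eq_or_ne xa xb with rfl | hne
  · rfl
  · obtain ⟨l, hInv, hxl, hyl⟩ := hpair xa xb
    rw [hisoe xa xb] at hq
    exact (hInv.2.2.2 _ hxl _ hyl hne hq).1

lemma cell_top (s0 : S) (hmax : ∀ s ∈ S, s ≤ (s0 : ℝ)) (z z' : QS S) (b : ℕ) :
    cell z s0 b = cell z' s0 b :=
  cell_eq_of_agree (fun s hs => absurd (hmax s s.2) (not_le.2 hs)) b

lemma Bad_top_indep (s0 : S) (hmax : ∀ s ∈ S, s ≤ (s0 : ℝ)) {f : QS S → ℕ}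
    {z z' : QS S} (h : Bad f z s0) : Bad f z' s0 := by
  cases h with
  | mk _ _ F G g hlt hbd =>
    refine Bad.mk z' s0 F G g ?_ ?_ <;> intro b hb y hy hfy
    · exact hlt b hb y (by rwa [cell_top s0 hmax z' z] at hy) hfy
    · exact hbd b hb y (by rwa [cell_top s0 hmax z' z] at hy) hfy

lemma TopIq (hpos : S ⊆ Set.Ioi 0) (hwo : RevWellOrdered S) (s0 : S)
    (hmax : ∀ s ∈ S, s ≤ (s0 : ℝ)) {f : QS S → ℕ} (h : Bad f pt0 s0) :
    ∃ r₀, Iq f r₀ ((s0 : ℝ) + 1) := by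
  obtain ⟨b, hb, r₀, hr₀, hIq₀⟩ := LF hpos hwo pt0 s0 h ∅
  refine ⟨r₀, ?_⟩
  obtain ⟨τ, hτ, hcpt, hslots⟩ := hIq₀.unfold
  refine ⟨fun r t => Iq f r t ∨ (r = r₀ ∧ t = (s0 : ℝ) + 1), Or.inr ⟨rfl, rfl⟩, ?_⟩
  rintro r₁ t₁ (hIq | ⟨rfl, rfl⟩)
  · obtain ⟨τ1, h1, h2, h3⟩ := hIq.unfold
    refine ⟨τ1, h1, h2, fun σ hs1 hs2 G => ?_⟩
    obtain ⟨c, hc, r', hr', hIq'⟩ := h3 σ hs1 hs2 G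
    exact ⟨c, hc, r', hr', Or.inl hIq'⟩
  · refine ⟨τ, hτ, hcpt, ?_⟩
    intro σ h1 h2 G
    rcases lt_or_ge ((σ : ℝ)) ((s0 : ℝ)) with h3 | h3
    · obtain ⟨c, hc, r', hr', hIq'⟩ := hslots σ h1 h3 G
      exact ⟨c, hc, r', hr', Or.inl hIq'⟩
    · have hσs0 : σ = s0 := Subtype.ext (le_antisymm (hmax _ σ.2) h3)
      obtain ⟨c, hc, r', hr', hIq'⟩ := LF hpos hwo pt0 s0 h G
      refine ⟨c, hc, r', ?_, Or.inl (by rw [hσs0]; exact hIq')⟩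
      rw [hσs0]
      rwa [cell_top s0 hmax pt0 r₁] at hr'

end
end Stmt3

/-- If `S ⊆ (0,∞)` is infinite countable and `>`
well-orders `S`, then for every `f : Q_S → ℕ` there is an isometric copy `X`
of `Q_S` inside `Q_S` on which `f` is continuous (into discrete `ℕ`,
i.e. locally constant on `X`) or injective. -/
theorem stmt3 (S : Set ℝ) (hpos : S ⊆ Set.Ioi 0) (hcount : S.Countable)
    (hinf : S.Infinite) (hwo : RevWellOrdered S) (f : QS S → ℕ) :
    ∃ X : Set (QS S), IsCopyOfQS S X ∧
      ((∀ x ∈ X, ∃ ε > (0:ℝ), ∀ y ∈ X, qdist S x y < ε → f y = f x) ∨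
        Set.InjOn f X) := by
  classical
  obtain ⟨m, hmS, hmax⟩ := hwo S subset_rfl hinf.nonempty
  set s0 : ↥S := ⟨m, hmS⟩ with hs0
  have hmax' : ∀ s ∈ S, s ≤ (s0 : ℝ) := hmax
  by_cases hB : Stmt3.Bad f Stmt3.pt0 s0
  · obtain ⟨X, hcopy, hcont⟩ := Stmt3.continuity_copy hpos hcount s0 hmax'
      (Stmt3.TopIq hpos hwo s0 hmax' hB)
    exact ⟨X, hcopy, Or.inl hcont⟩
  · obtain ⟨b, hb, y, hy, hyF, hygood⟩ := Stmt3.notBad_unfold hB ∅ ∅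
    have hroot : ∀ σ : ↥S, ¬ Stmt3.Bad f y σ := by
      intro σ
      rcases lt_or_eq_of_le (hmax' _ σ.2) with h1 | h1
      · exact hygood σ h1
      · intro hcon
        have hσs0 : σ = s0 := Subtype.ext h1
        rw [hσs0] at hcon
        exact hB (Stmt3.Bad_top_indep s0 hmax' hcon)
    obtain ⟨X, hcopy, hinj⟩ := Stmt3.injective_copy hpos hcount s0 hmax' ⟨y, hroot⟩
    exact ⟨X, hcopy, Or.inr hinj⟩
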